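/- arXiv:math/0603608 — 4 statements merged into one kernel-verified Lean document; each statement's English description precedes it below -/
import Mathlib

section
/- Let φ be the substitution φ(i) = 0^t(i+1) for i < m-1, φ(m-1) = 0^s with t ≥ s ≥ 1, and u_β its fixed point. If w is a factor of u_β whose first and last letters are nonzero, then there exists a factor w' of u_β with 0^t · w = φ(w'). -/
/-- The canonical substitution associated with a simple Parry number `β` with
`d_β(1) = t t ⋯ t s` (`m` digits): `φ(i) = 0^t (i+1)` for `i ≤ m-2` and
`φ(m-1) = 0^s`.  Letters are encoded as natural numbers `0, …, m-1`. -/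
def phi (m t s : ℕ) : ℕ → List ℕ := fun a =>
  if a = m - 1 then List.replicate s 0 else List.replicate t 0 ++ [a + 1]

/-- Application of a morphism to a finite word. -/
def applyMorph (f : ℕ → List ℕ) (l : List ℕ) : List ℕ := l.flatMap f

/-- `w` is a factor of the fixed point `u_β = lim φⁿ(0)` of the substitution,
i.e. `w` is a factor of some `φⁿ(0)`. -/
def inLang (f : ℕ → List ℕ) (w : List ℕ) : Prop :=
  ∃ k : ℕ, w <:+: (applyMorph f)^[k] [0]

lemma applyMorph_cons (f : ℕ → List ℕ) (a : ℕ) (l : List ℕ) :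
    applyMorph f (a :: l) = f a ++ applyMorph f l := by
  simp [applyMorph]

lemma split_rep {p X Y : List ℕ} {n c : ℕ} (h : p ++ X = List.replicate n c ++ Y)
    (hp : p.length ≤ n) :
    p = List.replicate p.length c ∧ X = List.replicate (n - p.length) c ++ Y := by
  have hrep : List.replicate n c =
      List.replicate p.length c ++ List.replicate (n - p.length) c := by
    rw [← List.replicate_add]; congr 1; omega
  rw [hrep, List.append_assoc] at h
  have := List.append_inj h (by simp)
  exact ⟨this.1, this.2⟩

lemma getLast_congr {l₁ l₂ : List ℕ} (h : l₁ = l₂) (h₁ : l₁ ≠ []) :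
    l₁.getLast h₁ = l₂.getLast (h ▸ h₁) := by subst h; rfl

lemma lemB (m t s : ℕ) (v : List ℕ) :
    ∀ (u q : List ℕ) (hu : u ≠ []), u.getLast hu ≠ 0 →
      u ++ q = applyMorph (phi m t s) v →
      ∃ v', v' <+: v ∧ u = applyMorph (phi m t s) v' := by
  induction v with
  | nil =>
    intro u q hu _ h
    simp [applyMorph] at h
    exact absurd h.1 hu
  | cons a v'' ih =>
    intro u q hu hlast h
    rw [applyMorph_cons] at h
    rcases List.append_eq_append_iff.mp h with ⟨a', ha1, ha2⟩ | ⟨c', hc1, hc2⟩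
    · -- phi a = u ++ a'
      by_cases ha : a = m - 1
      · exfalso
        apply hlast
        have hmem : u.getLast hu ∈ u ++ a' := List.mem_append_left _ (List.getLast_mem hu)
        rw [← ha1] at hmem
        simp only [phi, if_pos ha] at hmem
        exact List.eq_of_mem_replicate hmem
      · simp only [phi, if_neg ha] at ha1
        rcases eq_or_ne a' [] with rfl | ha'
        · have hu' : u = List.replicate t 0 ++ [a + 1] := by simpa using ha1.symm
          refine ⟨[a], ⟨v'', rfl⟩, ?_⟩
          simp [applyMorph, phi, if_neg ha, hu']
        · exfalso
          apply hlast
          have hlen : u.length ≤ t := by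
            have := congrArg List.length ha1
            simp at this
            have : u.length + a'.length = t + 1 := by omega
            have := List.length_pos_iff.mpr ha'
            omega
          obtain ⟨h1, _⟩ := split_rep ha1.symm hlen
          have hall : ∀ x ∈ u, x = 0 := by
            intro x hx
            rw [h1] at hx
            exact List.eq_of_mem_replicate hx
          exact hall _ (List.getLast_mem hu)
    · -- u = phi a ++ c'
      rcases eq_or_ne c' [] with rfl | hc'
      · refine ⟨[a], ⟨v'', rfl⟩, ?_⟩
        simp [applyMorph, hc1]
      · have hlast' : c'.getLast hc' ≠ 0 := by
          have h2 := getLast_congr hc1 hu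
          rwa [h2, List.getLast_append_of_ne_nil (h₂ := hc')] at hlast
        obtain ⟨v₂, hv₂, hc'eq⟩ := ih c' q hc' hlast' hc2.symm
        refine ⟨a :: v₂, List.cons_prefix_cons.mpr ⟨rfl, hv₂⟩, ?_⟩
        rw [applyMorph_cons, hc1, hc'eq]

lemma lemA (m t s : ℕ) (v : List ℕ) :
    ∀ (p w q : List ℕ) (hw : w ≠ []), w.head hw ≠ 0 → w.getLast hw ≠ 0 →
      p ++ (w ++ q) = applyMorph (phi m t s) v →
      ∃ v', v' <:+: v ∧ List.replicate t 0 ++ w = applyMorph (phi m t s) v' := by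
  induction v with
  | nil =>
    intro p w q hw _ _ h
    simp [applyMorph] at h
    exact absurd h.2.1 hw
  | cons a v'' ih =>
    intro p w q hw hhead hlast h
    rw [applyMorph_cons] at h
    rcases List.append_eq_append_iff.mp h with ⟨a', ha1, ha2⟩ | ⟨c', hc1, hc2⟩
    · -- phi a = p ++ a', w ++ q = a' ++ applyMorph phi v''
      rcases eq_or_ne a' [] with rfl | ha'
      · simp only [List.nil_append] at ha2
        obtain ⟨v', hv', heq⟩ := ih [] w q hw hhead hlast (by simpa using ha2)
        exact ⟨v', hv'.trans (List.infix_cons (List.infix_refl _)), heq⟩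
      · have hheq : w.head hw = a'.head ha' := by
          have e1 : w.head hw :: (w.tail ++ q)
              = a'.head ha' :: (a'.tail ++ applyMorph (phi m t s) v'') := by
            rw [← List.cons_append, ← List.cons_append, List.cons_head_tail, List.cons_head_tail]
            exact ha2
          exact (List.cons_eq_cons.mp e1).1
        by_cases ha : a = m - 1
        · exfalso
          apply hhead
          have hsuf : a' <:+ phi m t s a := ⟨p, ha1.symm⟩
          have hmem : w.head hw ∈ phi m t s a := by
            apply hsuf.subset
            rw [hheq]
            exact List.head_mem ha'
          simp only [phi, if_pos ha] at hmem
          exact List.eq_of_mem_replicate hmem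
        · simp only [phi, if_neg ha] at ha1
          have hlen : p.length ≤ t := by
            have hl1 := congrArg List.length ha1
            have hl2 := List.length_pos_iff.mpr ha'
            simp at hl1
            omega
          obtain ⟨hp, ha'eq⟩ := split_rep ha1.symm hlen
          have hpt : p.length = t := by
            by_contra hne
            apply hhead
            have hrw : a' = 0 :: (List.replicate (t - p.length - 1) 0 ++ [a + 1]) := by
              rw [ha'eq]
              have hsucc : t - p.length = (t - p.length - 1) + 1 := by omega
              rw [hsucc, List.replicate_succ]
              simp
            rw [hheq]
            simp [hrw]
          have ha'v : a' = [a + 1] := by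
            rw [ha'eq, hpt]
            simp
          have e1 : w.head hw :: (w.tail ++ q)
              = (a + 1) :: applyMorph (phi m t s) v'' := by
            rw [← List.cons_append, List.cons_head_tail]
            rw [ha'v] at ha2
            exact ha2
          have hheadval : w.head hw = a + 1 := (List.cons_eq_cons.mp e1).1
          have htq : w.tail ++ q = applyMorph (phi m t s) v'' := (List.cons_eq_cons.mp e1).2
          have hwc : w = (a + 1) :: w.tail := by
            rw [← hheadval]
            exact (List.cons_head_tail hw).symm
          rcases eq_or_ne w.tail [] with htail | htail
          · refine ⟨[a], (List.cons_prefix_cons.mpr ⟨rfl, List.nil_prefix⟩).isInfix, ?_⟩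
            rw [hwc, htail]
            simp [applyMorph, phi, if_neg ha]
          · have hlast' : w.tail.getLast htail ≠ 0 := by
              have h2 := getLast_congr hwc hw
              rwa [h2, List.getLast_cons htail] at hlast
            obtain ⟨v₂, hv₂, hteq⟩ := lemB m t s v'' w.tail q htail hlast' htq
            refine ⟨a :: v₂, (List.cons_prefix_cons.mpr ⟨rfl, hv₂⟩).isInfix, ?_⟩
            rw [applyMorph_cons, ← hteq]
            conv_lhs => rw [hwc]
            simp [phi, if_neg ha]
    · -- p = phi a ++ c'
      obtain ⟨v', hv', heq⟩ := ih c' w q hw hhead hlast hc2.symm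
      exact ⟨v', hv'.trans (List.infix_cons (List.infix_refl _)), heq⟩

/-- If `w` is a factor of `u_β` whose first and last letters are nonzero, then
there exists a factor `w'` of `u_β` with `0^t · w = φ(w')`. -/
theorem stmt6 (m t s : ℕ) (hm : 1 ≤ m) (hs : 1 ≤ s) (hts : s ≤ t)
    (w : List ℕ) (hw : inLang (phi m t s) w) (hne : w ≠ [])
    (hh : w.head hne ≠ 0) (hl : w.getLast hne ≠ 0) :
    ∃ w' : List ℕ, inLang (phi m t s) w' ∧
      List.replicate t 0 ++ w = applyMorph (phi m t s) w' := by
  obtain ⟨k, hinf⟩ := hw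
  cases k with
  | zero =>
    exfalso
    apply hh
    have : w.head hne ∈ [0] := by
      apply hinf.subset
      exact List.head_mem hne
    simpa using this
  | succ k' =>
    rw [Function.iterate_succ_apply'] at hinf
    obtain ⟨p, q, hpq⟩ := hinf
    obtain ⟨v', hv', heq⟩ := lemA m t s _ p w q hne hh hl (by rw [← hpq]; simp)
    exact ⟨v', ⟨k', hv'⟩, heq⟩
end

section
/- Let φ be the substitution φ(i) = 0^t(i+1) for i < m-1, φ(m-1) = 0^s with t ≥ s ≥ 1, and u_β its fixed point. For a palindromic factor p of u_β and a letter a ≠ m-1, the word a·p·a is a factor of u_β if and only if (a+1)·φ(p)·0^t·(a+1) is a factor of u_β. -/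
lemma applyMorph_append (f : ℕ → List ℕ) (x y : List ℕ) :
    applyMorph f (x ++ y) = applyMorph f x ++ applyMorph f y := by
  simp [applyMorph]

lemma skip_zeros {n : ℕ} {X l r : List ℕ} {b : ℕ} (hb : b ≠ 0)
    (h : List.replicate n 0 ++ X = l ++ b :: r) :
    ∃ l', l = List.replicate n 0 ++ l' ∧ X = l' ++ b :: r := by
  rcases List.append_eq_append_iff.1 h with ⟨a', ha1, ha2⟩ | ⟨c', hc1, hc2⟩
  · exact ⟨a', ha1, ha2⟩
  · cases c' with
    | nil => exact ⟨[], by simp [hc1], by simpa using hc2.symm⟩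
    | cons x xs =>
      exfalso
      apply hb
      have hx : x ∈ List.replicate n 0 := hc1 ▸ (by simp)
      have : b = x := by injection hc2
      rw [this]
      exact List.eq_of_mem_replicate hx

/-- Every nonzero letter in `φ(v)` is the final letter of a block `φ(c)`
with `b = c + 1`. -/
lemma boundary (m t s : ℕ) :
    ∀ (v l r : List ℕ) (b : ℕ), b ≠ 0 →
      applyMorph (phi m t s) v = l ++ b :: r →
      ∃ v1 c v2, v = v1 ++ c :: v2 ∧ b = c + 1 ∧
        l = applyMorph (phi m t s) v1 ++ List.replicate t 0 ∧
        r = applyMorph (phi m t s) v2 := by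
  intro v
  induction v with
  | nil =>
    intro l r b hb h
    simp [applyMorph] at h
  | cons c v' ih =>
    intro l r b hb h
    rw [show (c :: v') = [c] ++ v' from rfl, applyMorph_append] at h
    by_cases hc : c = m - 1
    · have h' : List.replicate s 0 ++ applyMorph (phi m t s) v' = l ++ b :: r := by
        simpa [applyMorph, phi, hc] using h
      obtain ⟨l', rfl, h2⟩ := skip_zeros hb h'
      obtain ⟨v1, c', v2, h3, h4, h5, h6⟩ := ih l' r b hb h2
      refine ⟨c :: v1, c', v2, by simp [h3], h4, ?_, h6⟩
      rw [h5, show (c :: v1) = [c] ++ v1 from rfl, applyMorph_append]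
      simp [applyMorph, phi, hc]
    · have h' : List.replicate t 0 ++ ((c+1) :: applyMorph (phi m t s) v')
          = l ++ b :: r := by
        simpa [applyMorph, phi, hc] using h
      obtain ⟨l', rfl, h2⟩ := skip_zeros hb h'
      cases l' with
      | nil =>
        have hbc : b = c + 1 := by injection h2.symm
        have hrest : applyMorph (phi m t s) v' = r := by injection h2
        exact ⟨[], c, v', by simp, hbc, by simp [applyMorph], hrest.symm⟩
      | cons x xs =>
        have hx : x = c + 1 := by injection h2.symm
        have h3 : applyMorph (phi m t s) v' = xs ++ b :: r := by injection h2
        obtain ⟨v1, c', v2, h4, h5, h6, h7⟩ := ih xs r b hb h3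
        refine ⟨c :: v1, c', v2, by simp [h4], h5, ?_, h7⟩
        rw [hx, h6, show (c :: v1) = [c] ++ v1 from rfl, applyMorph_append]
        simp [applyMorph, phi, hc]

/-- The morphism `φ` is injective on words (its code is a suffix code). -/
lemma phi_inj (m t s : ℕ) (hs : 1 ≤ s) (hts : s ≤ t) :
    ∀ x y : List ℕ, applyMorph (phi m t s) x = applyMorph (phi m t s) y → x = y := by
  have hne : ∀ c, phi m t s c ≠ [] := by
    intro c
    unfold phi
    split <;> simp [List.replicate, Nat.ne_of_gt hs]
  have hlen : ∀ x : List ℕ, x ≠ [] → applyMorph (phi m t s) x ≠ [] := by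
    intro x hx
    cases x with
    | nil => simp at hx
    | cons c x' =>
      rw [show (c :: x') = [c] ++ x' from rfl, applyMorph_append]
      intro hcon
      exact hne c (by simpa [applyMorph] using (List.append_eq_nil_iff.1 hcon).1)
  -- key: a mixed head (m-1 vs non-(m-1)) is impossible
  have hmix : ∀ (c d : ℕ) (x' y' : List ℕ), c = m - 1 → d ≠ m - 1 →
      applyMorph (phi m t s) (c :: x') ≠ applyMorph (phi m t s) (d :: y') := by
    intro c d x' y' hc hd h
    rw [show (c :: x') = [c] ++ x' from rfl, show (d :: y') = [d] ++ y' from rfl,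
      applyMorph_append, applyMorph_append] at h
    have h' : List.replicate s 0 ++ applyMorph (phi m t s) x'
        = List.replicate s 0 ++ (List.replicate (t - s) 0
            ++ (d + 1) :: applyMorph (phi m t s) y') := by
      rw [← List.append_assoc, ← List.replicate_add, Nat.add_sub_cancel' hts]
      simpa [applyMorph, phi, hc, hd] using h
    have h2 : applyMorph (phi m t s) x'
        = List.replicate (t - s) 0 ++ (d + 1) :: applyMorph (phi m t s) y' :=
      List.append_cancel_left h'
    obtain ⟨v1, c', v2, h3, h4, h5, h6⟩ := boundary m t s x' _ _ _ (by omega) h2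
    have := congrArg List.length h5
    simp at this
    omega
  have hsingle : ∀ c, applyMorph (phi m t s) [c] = phi m t s c := by
    intro c; simp [applyMorph]
  intro x
  induction x with
  | nil =>
    intro y h
    cases y with
    | nil => rfl
    | cons d y' =>
      have hy : applyMorph (phi m t s) (d :: y') = [] := by
        simpa [applyMorph] using h.symm
      exact absurd hy (hlen (d :: y') (by simp))
  | cons c x' ih =>
    intro y h
    cases y with
    | nil =>
      have hy : applyMorph (phi m t s) (c :: x') = [] := by
        simpa [applyMorph] using h
      exact absurd hy (hlen (c :: x') (by simp))
    | cons d y' =>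
      by_cases hc : c = m - 1 <;> by_cases hd : d = m - 1
      · have hcd : c = d := hc.trans hd.symm
        subst hcd
        rw [show (c :: x') = [c] ++ x' from rfl, show (c :: y') = [c] ++ y' from rfl,
          applyMorph_append, applyMorph_append] at h
        have h2 : applyMorph (phi m t s) x' = applyMorph (phi m t s) y' :=
          List.append_cancel_left h
        rw [ih y' h2]
      · exact absurd h (hmix c d x' y' hc hd)
      · exact absurd h.symm (hmix d c y' x' hd hc)
      · rw [show (c :: x') = [c] ++ x' from rfl, show (d :: y') = [d] ++ y' from rfl,
          applyMorph_append, applyMorph_append, hsingle, hsingle] at h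
        simp only [phi, if_neg hc, if_neg hd] at h
        rw [List.append_assoc, List.append_assoc] at h
        have h1 := List.append_cancel_left h
        simp only [List.singleton_append] at h1
        have hcd : c = d := by injection h1 with h1a h1b; omega
        have h2 : applyMorph (phi m t s) x' = applyMorph (phi m t s) y' := by
          injection h1
        rw [hcd, ih y' h2]

/-- For a palindromic factor `p` of `u_β` and a letter `a ≠ m-1`, the word
`a·p·a` is a factor of `u_β` iff `(a+1)·φ(p)·0^t·(a+1)` is a factor of `u_β`. -/
theorem stmt7 (m t s : ℕ) (hm : 1 ≤ m) (hs : 1 ≤ s) (hts : s ≤ t)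
    (p : List ℕ) (hp : inLang (phi m t s) p) (hpal : p.reverse = p)
    (a : ℕ) (ha : a < m) (ham : a ≠ m - 1) :
    inLang (phi m t s) ([a] ++ p ++ [a]) ↔
      inLang (phi m t s)
        ([a + 1] ++ (applyMorph (phi m t s) p ++ List.replicate t 0) ++ [a + 1]) := by
  constructor
  · rintro ⟨k, l, r, hk⟩
    refine ⟨k + 1, applyMorph (phi m t s) l ++ List.replicate t 0,
      applyMorph (phi m t s) r, ?_⟩
    rw [Function.iterate_succ_apply', ← hk]
    simp only [applyMorph_append]
    simp [applyMorph, phi, ham]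
  · rintro ⟨k, hk⟩
    cases k with
    | zero =>
      exfalso
      have h1 := hk.length_le
      simp at h1
    | succ k' =>
      rw [Function.iterate_succ_apply'] at hk
      obtain ⟨l, r, h⟩ := hk
      have h1 : applyMorph (phi m t s) ((applyMorph (phi m t s))^[k'] [0])
          = l ++ (a+1) :: (applyMorph (phi m t s) p ++ List.replicate t 0
              ++ (a+1) :: r) := by
        rw [← h]; simp
      obtain ⟨v1, c, v2, hv, hbc, hl, hr⟩ :=
        boundary m t s _ _ _ _ (by omega) h1
      have hca : a = c := by omega
      subst hca
      have h2 : applyMorph (phi m t s) v2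
          = (applyMorph (phi m t s) p ++ List.replicate t 0) ++ (a+1) :: r := by
        rw [← hr, List.append_assoc]
      obtain ⟨v3, c2, v4, hv2, hbc2, hl2, hr2⟩ :=
        boundary m t s v2 _ _ _ (by omega) h2
      have hc2a : a = c2 := by omega
      subst hc2a
      have hpv : p = v3 :=
        phi_inj m t s hs hts p v3 (List.append_cancel_right hl2)
      refine ⟨k', v1, v4, ?_⟩
      rw [hv, hv2, hpv]
      simp
end

section
/- Let φ be the substitution φ(i) = 0^t(i+1) for i < m-1, φ(m-1) = 0^s with t ≥ s ≥ 1 and t+s odd. If p₁ = w₁·(m-1)·reverse(w₁) is a palindrome with center the letter m-1, then φ(p₁)·0^t = w₂·0·reverse(w₂) where w₂ = φ(w₁)·0^{(s+t-1)/2}; i.e., φ(p₁)·0^t is a palindrome of odd length with center 0. -/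
lemma singleCase (m t s a : ℕ) : phi m t s a ++ List.replicate t 0
    = List.replicate t 0 ++ (phi m t s a).reverse := by
  unfold phi
  split
  · simp [← List.replicate_add, Nat.add_comm]
  · simp [List.append_assoc]

lemma keyLemma (m t s : ℕ) (w : List ℕ) :
    applyMorph (phi m t s) w.reverse ++ List.replicate t 0
      = List.replicate t 0 ++ (applyMorph (phi m t s) w).reverse := by
  induction w with
  | nil => simp [applyMorph]
  | cons x xs ih =>
    simp only [List.reverse_cons, applyMorph, List.flatMap_append, List.flatMap_cons,
      List.flatMap_nil, List.append_nil, List.reverse_append] at *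
    rw [List.append_assoc, singleCase, ← List.append_assoc, ih]
    simp [List.append_assoc]

/-- For `t + s` odd: if `p₁ = w₁·(m-1)·reverse(w₁)` is a palindrome with
center the letter `m-1`, then `φ(p₁)·0^t = w₂·0·reverse(w₂)` with
`w₂ = φ(w₁)·0^{(s+t-1)/2}`. -/
theorem stmt14 (m t s : ℕ) (hm : 1 ≤ m) (hs : 1 ≤ s) (hts : s ≤ t)
    (hodd : Odd (t + s)) (w₁ : List ℕ) (hw : ∀ x ∈ w₁, x < m) :
    applyMorph (phi m t s) (w₁ ++ [m - 1] ++ w₁.reverse) ++ List.replicate t 0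
      = (applyMorph (phi m t s) w₁ ++ List.replicate ((s + t - 1) / 2) 0) ++ [0]
          ++ (applyMorph (phi m t s) w₁
              ++ List.replicate ((s + t - 1) / 2) 0).reverse := by
  have hphi : phi m t s (m - 1) = List.replicate s 0 := by simp [phi]
  have harith : s + (s + t - 1) / 2 * 2 + 1 = s + t + s := by
    obtain ⟨k, hk⟩ := hodd
    omega
  calc applyMorph (phi m t s) (w₁ ++ [m - 1] ++ w₁.reverse) ++ List.replicate t 0
      = applyMorph (phi m t s) w₁ ++ List.replicate s 0 ++
          (applyMorph (phi m t s) w₁.reverse ++ List.replicate t 0) := by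
        simp [applyMorph, hphi, List.append_assoc]
    _ = applyMorph (phi m t s) w₁ ++ List.replicate s 0 ++
          (List.replicate t 0 ++ (applyMorph (phi m t s) w₁).reverse) := by
        rw [keyLemma]
    _ = _ := by
        simp only [List.reverse_append, List.reverse_replicate, List.append_assoc,
          ← List.replicate_succ']
        rw [← List.append_assoc (List.replicate s 0), ← List.replicate_add,
          ← List.append_assoc (List.replicate _ 0), ← List.replicate_add]
        obtain ⟨k, hk⟩ := hodd
        congr 3
        omega
end

section
/- Define V^(1) = 0^t and V^(n+1) = φ(V^(n))·0^t, where φ is the substitution φ(i) = 0^t(i+1) for i < m-1, φ(m-1) = 0^s, with t ≥ s ≥ 1 and t even. Then for every n ≥ 1, V^(n) is a palindrome of even length and V^(n) is a central factor of V^(n+1). -/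
/-- The palindromes `V⁽ⁿ⁾`: `V 0 = 0^t` (the paper's `V⁽¹⁾`) and
`V (n+1) = φ(V n)·0^t`. -/
def Vseq (m t s : ℕ) : ℕ → List ℕ
  | 0 => List.replicate t 0
  | n + 1 => applyMorph (phi m t s) (Vseq m t s n) ++ List.replicate t 0


lemma letterL (m t s : ℕ) (a : ℕ) :
    List.replicate t 0 ++ (phi m t s a).reverse = phi m t s a ++ List.replicate t 0 := by
  unfold phi
  by_cases h : a = m - 1 <;> simp [h, List.reverse_replicate, ← List.replicate_add, Nat.add_comm]

lemma morphL (m t s : ℕ) (l : List ℕ) :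
    List.replicate t 0 ++ (applyMorph (phi m t s) l).reverse
      = applyMorph (phi m t s) l.reverse ++ List.replicate t 0 := by
  induction l with
  | nil => simp [applyMorph]
  | cons a l ih =>
    have h1 : applyMorph (phi m t s) (a :: l) = phi m t s a ++ applyMorph (phi m t s) l := by
      simp [applyMorph]
    have h2 : applyMorph (phi m t s) (a :: l).reverse
        = applyMorph (phi m t s) l.reverse ++ phi m t s a := by
      simp [applyMorph]
    rw [h1, h2, List.reverse_append, ← List.append_assoc, ih, List.append_assoc,
      List.append_assoc, letterL]

lemma morphAppend (m t s : ℕ) (l l' : List ℕ) :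
    applyMorph (phi m t s) (l ++ l')
      = applyMorph (phi m t s) l ++ applyMorph (phi m t s) l' := by
  simp [applyMorph]

lemma lenRevMorph (f : ℕ → List ℕ) (l : List ℕ) :
    (applyMorph f l.reverse).length = (applyMorph f l).length := by
  show ((l.reverse).flatMap f).length = (l.flatMap f).length
  simp [List.length_flatMap, List.sum_reverse]

/-- For `t` even, every `V⁽ⁿ⁾` is a palindrome of even length and `V⁽ⁿ⁾` is a
central factor of `V⁽ⁿ⁺¹⁾`. -/
theorem stmt15 (m t s : ℕ) (hm : 1 ≤ m) (hs : 1 ≤ s) (hts : s ≤ t)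
    (ht : Even t) (n : ℕ) :
    (Vseq m t s n).reverse = Vseq m t s n ∧ Even (Vseq m t s n).length ∧
      ∃ w : List ℕ, Vseq m t s (n + 1) = w ++ Vseq m t s n ++ w.reverse := by
  induction n with
  | zero =>
    obtain ⟨k, hk⟩ := id ht
    refine ⟨List.reverse_replicate (n := t) (a := 0), by simpa [Vseq] using ht, ?_⟩
    refine ⟨applyMorph (phi m t s) (List.replicate k 0), ?_⟩
    have hsplit : List.replicate t (0:ℕ) = List.replicate k 0 ++ List.replicate k 0 := by
      rw [← List.replicate_add, ← hk]
    have hL := morphL m t s (List.replicate k 0)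
    rw [List.reverse_replicate] at hL
    show applyMorph (phi m t s) (List.replicate t 0) ++ List.replicate t 0
      = applyMorph (phi m t s) (List.replicate k 0) ++ List.replicate t 0
        ++ (applyMorph (phi m t s) (List.replicate k 0)).reverse
    rw [List.append_assoc, hL]
    conv_lhs => rw [hsplit, morphAppend]
    rw [List.append_assoc, ← hsplit]
  | succ n ih =>
    obtain ⟨hpal, hev, w, hw⟩ := ih
    have hpal' : (Vseq m t s (n + 1)).reverse = Vseq m t s (n + 1) := by
      show (applyMorph (phi m t s) (Vseq m t s n) ++ List.replicate t 0).reverse = _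
      rw [List.reverse_append, List.reverse_replicate, morphL, hpal]
      rfl
    refine ⟨hpal', ?_, ?_⟩
    · obtain ⟨k, hk⟩ := hev
      have hdrop : (Vseq m t s n).drop k = ((Vseq m t s n).take k).reverse := by
        have h := List.reverse_drop (l := Vseq m t s n) (i := k)
        rw [hpal] at h
        have hlen : (Vseq m t s n).length - k = k := by omega
        rw [hlen] at h
        rw [← h, List.reverse_reverse]
      have hV : Vseq m t s n = (Vseq m t s n).take k ++ ((Vseq m t s n).take k).reverse := by
        conv_lhs => rw [← List.take_append_drop k (Vseq m t s n), hdrop]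
      have h2 : (applyMorph (phi m t s) (Vseq m t s n)).length
          = 2 * (applyMorph (phi m t s) ((Vseq m t s n).take k)).length := by
        conv_lhs => rw [hV, morphAppend]
        rw [List.length_append, lenRevMorph]
        omega
      have hlen1 : (Vseq m t s (n + 1)).length
          = (applyMorph (phi m t s) (Vseq m t s n)).length + t := by
        simp [Vseq]
      rw [hlen1, h2]
      obtain ⟨j, hj⟩ := id ht
      exact ⟨(applyMorph (phi m t s) ((Vseq m t s n).take k)).length + j, by omega⟩
    · refine ⟨applyMorph (phi m t s) w, ?_⟩
      have hL := morphL m t s w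
      show applyMorph (phi m t s) (Vseq m t s (n+1)) ++ List.replicate t 0
        = applyMorph (phi m t s) w
          ++ (applyMorph (phi m t s) (Vseq m t s n) ++ List.replicate t 0)
          ++ (applyMorph (phi m t s) w).reverse
      rw [hw, morphAppend, morphAppend, List.append_assoc, List.append_assoc, ← hL]
      simp [List.append_assoc]
end
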